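/- arXiv:1701.03787 — 2 statements merged into one kernel-verified Lean document; each statement's English description precedes it below -/
import Mathlib

section
/- Let φ̂_k(x) = T_k(x) − T_{k+2}(x) and φ̃_k(x) = T_k(x) − (2(k+2)/(k+3)) T_{k+2}(x) + ((k+1)/(k+3)) T_{k+4}(x). For all j, k ∈ ℕ the mixed mass matrix entries M̃_{kj} = ⟨φ̂_j, φ̃_k⟩_σ satisfy: M̃_{kj} = −π/2 if j = k−2; M̃_{kk} = (π/2)(c_k + 2(k+2)/(k+3)); M̃_{k,k+2} = −(π/2)(2(k+2)/(k+3) + (k+1)/(k+3)); M̃_{k,k+4} = (π/2)(k+1)/(k+3); and M̃_{kj} = 0 otherwise. -/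
open Real Polynomial

/-- The k-th Chebyshev polynomial of the first kind, as a real polynomial. -/
noncomputable def chebT (n : ℕ) : Polynomial ℝ := Polynomial.Chebyshev.T ℝ (n : ℤ)

/-- The Chebyshev-weighted inner product `⟨f,g⟩_σ = ∫_{-1}^{1} f g (1-x²)^{-1/2} dx`. -/
noncomputable def chebInner (f g : Polynomial ℝ) : ℝ :=
  ∫ x in (-1:ℝ)..1, f.eval x * g.eval x / Real.sqrt (1 - x ^ 2)

/-- Shen's Dirichlet basis function `φ̂_k = T_k − T_{k+2}`. -/
noncomputable def shenD (k : ℕ) : Polynomial ℝ := chebT k - chebT (k + 2)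

/-- Shen's biharmonic basis function
`φ̃_k = T_k − (2(k+2)/(k+3)) T_{k+2} + ((k+1)/(k+3)) T_{k+4}`. -/
noncomputable def shenB (k : ℕ) : Polynomial ℝ :=
  chebT k - Polynomial.C ((2 * ((k : ℝ) + 2)) / ((k : ℝ) + 3)) * chebT (k + 2)
    + Polynomial.C (((k : ℝ) + 1) / ((k : ℝ) + 3)) * chebT (k + 4)

/-- `c_0 = 2`, `c_k = 1` for `k ≥ 1`. -/
noncomputable def cCoef (k : ℕ) : ℝ := if k = 0 then 2 else 1

section Aux
open Set MeasureTheory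

lemma image_cos_Ioo : cos '' Ioo 0 π = Ioo (-1 : ℝ) 1 := by
  apply Subset.antisymm
  · rintro y ⟨x, ⟨hx0, hxπ⟩, rfl⟩
    constructor
    · have := Real.strictAntiOn_cos ⟨le_of_lt hx0, le_of_lt hxπ⟩
        ⟨Real.pi_pos.le, le_refl π⟩ hxπ
      simpa using this
    · have := Real.strictAntiOn_cos ⟨le_refl (0:ℝ), Real.pi_pos.le⟩
        ⟨le_of_lt hx0, le_of_lt hxπ⟩ hx0
      simpa using this
  · rintro y ⟨h1, h2⟩
    refine ⟨Real.arccos y, ⟨Real.arccos_pos.2 h2, ?_⟩, Real.cos_arccos h1.le h2.le⟩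
    have : -(π/2) < Real.arcsin y := by
      rw [← Real.arcsin_neg_one]
      exact Real.strictMonoOn_arcsin ⟨le_refl _, by norm_num⟩ ⟨h1.le, h2.le⟩ h1
    rw [Real.arccos]
    linarith

lemma cheb_subst (P : Polynomial ℝ) :
    (∫ x in (-1:ℝ)..1, P.eval x / Real.sqrt (1 - x ^ 2)) =
      ∫ θ in (0:ℝ)..π, P.eval (Real.cos θ) := by
  rw [intervalIntegral.integral_of_le (by norm_num : (-1:ℝ) ≤ 1),
      intervalIntegral.integral_of_le Real.pi_pos.le,
      MeasureTheory.integral_Ioc_eq_integral_Ioo,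
      MeasureTheory.integral_Ioc_eq_integral_Ioo,
      ← image_cos_Ioo,
      MeasureTheory.integral_image_eq_integral_abs_deriv_smul measurableSet_Ioo
        (fun x _ => (Real.hasDerivAt_cos x).hasDerivWithinAt)
        (Real.injOn_cos.mono Set.Ioo_subset_Icc_self)]
  apply MeasureTheory.setIntegral_congr_fun measurableSet_Ioo
  intro θ ⟨h0, hπ⟩
  have hs : 0 < Real.sin θ := Real.sin_pos_of_pos_of_lt_pi h0 hπ
  have : Real.sqrt (1 - Real.cos θ ^ 2) = Real.sin θ := by
    rw [show 1 - Real.cos θ ^ 2 = Real.sin θ ^ 2 by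
      have := Real.sin_sq_add_cos_sq θ; linarith]
    exact Real.sqrt_sq hs.le
  simp only [smul_eq_mul, abs_neg, abs_of_pos hs, this]
  field_simp

lemma integral_cos_int (c : ℤ) :
    (∫ θ in (0:ℝ)..π, Real.cos (c * θ)) = if c = 0 then π else 0 := by
  rcases eq_or_ne c 0 with rfl | hc
  · simp
  · rw [if_neg hc]
    have h : (c:ℝ) ≠ 0 := Int.cast_ne_zero.2 hc
    rw [intervalIntegral.integral_comp_mul_left (fun x => Real.cos x) h]
    rw [mul_zero, smul_eq_mul, integral_cos]
    simp [Real.sin_int_mul_pi]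

lemma integral_cos_cos (a b : ℕ) :
    (∫ θ in (0:ℝ)..π, Real.cos (a * θ) * Real.cos (b * θ)) =
      if a = b then (if a = 0 then π else π / 2) else 0 := by
  have key : ∀ θ : ℝ, Real.cos (a * θ) * Real.cos (b * θ) =
      (Real.cos (((((a:ℤ) + (b:ℤ)) : ℤ) : ℝ) * θ) + Real.cos (((((a:ℤ) - (b:ℤ)) : ℤ) : ℝ) * θ)) / 2 := by
    intro θ
    have h1 := Real.cos_add (a * θ) (b * θ)
    have h2 := Real.cos_sub (a * θ) (b * θ)
    push_cast
    rw [add_mul, sub_mul, h1, h2]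
    ring
  simp only [key]
  rw [intervalIntegral.integral_div, intervalIntegral.integral_add
    (Continuous.intervalIntegrable (by continuity) _ _)
    (Continuous.intervalIntegrable (by continuity) _ _),
    integral_cos_int, integral_cos_int]
  rcases eq_or_ne a b with rfl | hab
  · rcases eq_or_ne a 0 with rfl | ha <;> simp [*]
  · have h1 : (a:ℤ) + b ≠ 0 := by omega
    have h2 : (a:ℤ) - b ≠ 0 := by omega
    simp [h1, h2, hab]


lemma chebInner_eq (f g : Polynomial ℝ) :
    chebInner f g = ∫ θ in (0:ℝ)..π, f.eval (Real.cos θ) * g.eval (Real.cos θ) := by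
  have := cheb_subst (f * g)
  simp only [Polynomial.eval_mul] at this
  exact this

noncomputable def TT (m n : ℕ) : ℝ := ∫ θ in (0:ℝ)..π, Real.cos (m * θ) * Real.cos (n * θ)

lemma TT_eq (m n : ℕ) : TT m n = if m = n then (if m = 0 then π else π / 2) else 0 :=
  integral_cos_cos m n

lemma integral_six (f1 f2 f3 f4 f5 f6 : ℝ → ℝ) (h1 : Continuous f1) (h2 : Continuous f2)
    (h3 : Continuous f3) (h4 : Continuous f4) (h5 : Continuous f5) (h6 : Continuous f6)
    (c1 c2 c3 c4 c5 c6 : ℝ) :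
    (∫ θ in (0:ℝ)..π, (c1 * f1 θ + c2 * f2 θ + c3 * f3 θ + c4 * f4 θ + c5 * f5 θ + c6 * f6 θ)) =
      c1 * (∫ θ in (0:ℝ)..π, f1 θ) + c2 * (∫ θ in (0:ℝ)..π, f2 θ) +
      c3 * (∫ θ in (0:ℝ)..π, f3 θ) + c4 * (∫ θ in (0:ℝ)..π, f4 θ) +
      c5 * (∫ θ in (0:ℝ)..π, f5 θ) + c6 * (∫ θ in (0:ℝ)..π, f6 θ) := by
  rw [intervalIntegral.integral_add, intervalIntegral.integral_add,
      intervalIntegral.integral_add, intervalIntegral.integral_add,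
      intervalIntegral.integral_add] <;>
    first
      | (apply Continuous.intervalIntegrable; continuity)
      | rw [intervalIntegral.integral_const_mul, intervalIntegral.integral_const_mul,
            intervalIntegral.integral_const_mul, intervalIntegral.integral_const_mul,
            intervalIntegral.integral_const_mul, intervalIntegral.integral_const_mul]


lemma contCC (m n : ℝ) : Continuous fun θ : ℝ => Real.cos (m * θ) * Real.cos (n * θ) :=
  (Real.continuous_cos.comp (continuous_const.mul continuous_id)).mul
    (Real.continuous_cos.comp (continuous_const.mul continuous_id))

lemma inner_shen (j k : ℕ) :
    chebInner (shenD j) (shenB k) =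
      TT j k + (-(2 * ((k:ℝ) + 2) / ((k:ℝ) + 3))) * TT j (k + 2)
        + (((k:ℝ) + 1) / ((k:ℝ) + 3)) * TT j (k + 4)
        + (-1) * TT (j + 2) k
        + (2 * ((k:ℝ) + 2) / ((k:ℝ) + 3)) * TT (j + 2) (k + 2)
        + (-(((k:ℝ) + 1) / ((k:ℝ) + 3))) * TT (j + 2) (k + 4) := by
  rw [chebInner_eq]
  have expand : ∀ θ : ℝ, (shenD j).eval (Real.cos θ) * (shenB k).eval (Real.cos θ) =
      1 * (Real.cos (j * θ) * Real.cos (k * θ))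
      + (-(2 * ((k:ℝ) + 2) / ((k:ℝ) + 3))) * (Real.cos (j * θ) * Real.cos ((k+2 : ℕ) * θ))
      + (((k:ℝ) + 1) / ((k:ℝ) + 3)) * (Real.cos (j * θ) * Real.cos ((k+4 : ℕ) * θ))
      + (-1) * (Real.cos ((j+2 : ℕ) * θ) * Real.cos (k * θ))
      + (2 * ((k:ℝ) + 2) / ((k:ℝ) + 3)) * (Real.cos ((j+2 : ℕ) * θ) * Real.cos ((k+2 : ℕ) * θ))
      + (-(((k:ℝ) + 1) / ((k:ℝ) + 3))) * (Real.cos ((j+2 : ℕ) * θ) * Real.cos ((k+4 : ℕ) * θ)) := by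
    intro θ
    simp only [shenD, shenB, chebT, Polynomial.eval_sub, Polynomial.eval_add,
      Polynomial.eval_mul, Polynomial.eval_C, Polynomial.Chebyshev.T_real_cos]
    push_cast
    ring
  rw [intervalIntegral.integral_congr (g := fun θ =>
      1 * (Real.cos (j * θ) * Real.cos (k * θ))
      + (-(2 * ((k:ℝ) + 2) / ((k:ℝ) + 3))) * (Real.cos (j * θ) * Real.cos ((k+2 : ℕ) * θ))
      + (((k:ℝ) + 1) / ((k:ℝ) + 3)) * (Real.cos (j * θ) * Real.cos ((k+4 : ℕ) * θ))
      + (-1) * (Real.cos ((j+2 : ℕ) * θ) * Real.cos (k * θ))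
      + (2 * ((k:ℝ) + 2) / ((k:ℝ) + 3)) * (Real.cos ((j+2 : ℕ) * θ) * Real.cos ((k+2 : ℕ) * θ))
      + (-(((k:ℝ) + 1) / ((k:ℝ) + 3))) * (Real.cos ((j+2 : ℕ) * θ) * Real.cos ((k+4 : ℕ) * θ)))
      (fun θ _ => expand θ)]
  rw [integral_six _ _ _ _ _ _ (contCC _ _) (contCC _ _) (contCC _ _) (contCC _ _)
      (contCC _ _) (contCC _ _)]
  unfold TT
  ring

end Aux

/-- The mixed mass matrix `M̃_{kj} = ⟨φ̂_j, φ̃_k⟩_σ`: it is zero except on the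
diagonals `j = k−2, k, k+2, k+4`, where it takes the stated values. -/
theorem shen_mixed_mass_matrix :
    -- j = k − 2 (stated with row index k+2): M̃_{k+2,k} = −π/2
    (∀ k : ℕ, chebInner (shenD k) (shenB (k + 2)) = -(Real.pi / 2)) ∧
    -- j = k: M̃_{kk} = (π/2)(c_k + 2(k+2)/(k+3))
    (∀ k : ℕ, chebInner (shenD k) (shenB k) =
      Real.pi / 2 * (cCoef k + 2 * ((k : ℝ) + 2) / ((k : ℝ) + 3))) ∧
    -- j = k + 2: M̃_{k,k+2} = −(π/2)(2(k+2)/(k+3) + (k+1)/(k+3))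
    (∀ k : ℕ, chebInner (shenD (k + 2)) (shenB k) =
      -(Real.pi / 2) * (2 * ((k : ℝ) + 2) / ((k : ℝ) + 3) + ((k : ℝ) + 1) / ((k : ℝ) + 3))) ∧
    -- j = k + 4: M̃_{k,k+4} = (π/2)(k+1)/(k+3)
    (∀ k : ℕ, chebInner (shenD (k + 4)) (shenB k) =
      Real.pi / 2 * (((k : ℝ) + 1) / ((k : ℝ) + 3))) ∧
    -- otherwise zero
    (∀ j k : ℕ, k ≠ j + 2 → j ≠ k → j ≠ k + 2 → j ≠ k + 4 →
      chebInner (shenD j) (shenB k) = 0) := by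
  refine ⟨?_, ?_, ?_, ?_, ?_⟩
  · intro k
    rw [inner_shen]
    simp only [TT_eq]
    have h1 : k ≠ k + 2 + 2 := by omega
    have h2 : k ≠ k + 2 + 4 := by omega
    have h3 : k ≠ k + 2 := by omega
    have h4 : k + 2 ≠ k + 2 + 2 := by omega
    have h5 : k + 2 ≠ k + 2 + 4 := by omega
    have h6 : k + 2 ≠ 0 := by omega
    simp [h1, h2, h3, h4, h5, h6]
  · intro k
    rw [inner_shen]
    simp only [TT_eq]
    have h1 : k ≠ k + 2 := by omega
    have h2 : k ≠ k + 4 := by omega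
    have h3 : k + 2 ≠ k := by omega
    have h4 : k + 2 ≠ k + 4 := by omega
    have h5 : k + 2 ≠ 0 := by omega
    rcases eq_or_ne k 0 with rfl | hk
    · simp [h1, h2, h3, h4, h5, cCoef]
      ring
    · simp [h1, h2, h3, h4, h5, hk, cCoef]
      ring
  · intro k
    rw [inner_shen]
    simp only [TT_eq]
    have h1 : k + 2 ≠ k := by omega
    have h2 : k + 2 ≠ k + 4 := by omega
    have h3 : k + 2 + 2 ≠ k := by omega
    have h4 : k + 2 + 2 ≠ k + 2 := by omega
    have h5 : k + 2 ≠ 0 := by omega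
    have h6 : k + 2 + 2 ≠ 0 := by omega
    have h7 : k + 2 + 2 = k + 4 := by omega
    simp [h1, h2, h3, h4, h5, h6, h7]
    ring
  · intro k
    rw [inner_shen]
    simp only [TT_eq]
    have h1 : k + 4 ≠ k := by omega
    have h2 : k + 4 ≠ k + 2 := by omega
    have h3 : k + 4 + 2 ≠ k := by omega
    have h4 : k + 4 + 2 ≠ k + 2 := by omega
    have h5 : k + 4 + 2 ≠ k + 4 := by omega
    have h6 : k + 4 ≠ 0 := by omega
    simp [h1, h2, h3, h4, h5, h6]
    ring
  · intro j k hA hB hC hD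
    rw [inner_shen]
    simp only [TT_eq]
    have h1 : j ≠ k := hB
    have h2 : j ≠ k + 2 := hC
    have h3 : j ≠ k + 4 := hD
    have h4 : j + 2 ≠ k := fun h => hA h.symm
    have h5 : j + 2 ≠ k + 2 := by omega
    have h6 : j + 2 ≠ k + 4 := by omega
    simp [h1, h2, h3, h4, h5, h6]
end

section
/- Let N ∈ ℕ with N ≥ 2. The polynomials φ̂_0, φ̂_1, …, φ̂_{N−2}, where φ̂_k(x) = T_k(x) − T_{k+2}(x), form a basis of the real vector space { p ∈ ℝ[X] : deg p ≤ N, p(1) = 0 and p(−1) = 0 }; in particular they are linearly independent and this space has dimension N − 1. -/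
open Real Polynomial

/-- The space `{ p ∈ ℝ[X] : deg p ≤ N, p(1) = 0, p(−1) = 0 }` of polynomials of
degree at most `N` satisfying the homogeneous Dirichlet boundary conditions. -/
noncomputable def dirichletSpace (N : ℕ) : Submodule ℝ (Polynomial ℝ) where
  carrier := {p | p.degree ≤ (N : ℕ) ∧ p.eval (1 : ℝ) = 0 ∧ p.eval (-1 : ℝ) = 0}
  add_mem' := by
    rintro p q ⟨hp, hp1, hp2⟩ ⟨hq, hq1, hq2⟩
    exact ⟨le_trans (Polynomial.degree_add_le p q) (max_le hp hq),
      by simp [hp1, hq1], by simp [hp2, hq2]⟩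
  zero_mem' := ⟨by simp, by simp, by simp⟩
  smul_mem' := by
    rintro c p ⟨hp, hp1, hp2⟩
    exact ⟨le_trans (Polynomial.degree_smul_le c p) hp, by simp [hp1], by simp [hp2]⟩


lemma two_eq_C : (2 : ℝ[X]) = C 2 := (map_ofNat C 2).symm

lemma deg2X : (2 * X : ℝ[X]).degree = 1 := by
  rw [two_eq_C, degree_C_mul (by norm_num), degree_X]

lemma shenD_eq' (k : ℕ) : Chebyshev.T ℝ (k:ℤ) - Chebyshev.T ℝ ((k:ℤ)+2)
    = 2 * ((1 - X^2) * Chebyshev.U ℝ (k:ℤ)) := by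
  have h1 := Chebyshev.one_sub_X_sq_mul_U_eq_pol_in_T ℝ (k:ℤ)
  have h2 := Chebyshev.T_mul_T ℝ ((k:ℤ)+1) 1
  simp only [Chebyshev.T_one, Int.add_sub_cancel] at h2
  rw [show ((k:ℤ)+1+1) = (k:ℤ)+2 by ring] at h2
  linear_combination (-2) * h1 - h2

lemma chebU_degree : ∀ n : ℕ, (Chebyshev.U ℝ (n:ℤ)).degree = n := by
  have key : ∀ n : ℕ, (Chebyshev.U ℝ (n:ℤ)).degree = n ∧
      (Chebyshev.U ℝ ((n:ℤ)+1)).degree = ((n:WithBot ℕ)+1) := by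
    intro n
    induction n with
    | zero =>
      refine ⟨by simp [Chebyshev.U_zero], ?_⟩
      simpa [Chebyshev.U_one] using deg2X
    | succ n ih =>
      obtain ⟨h1, h2⟩ := ih
      have hrec := Chebyshev.U_add_two ℝ (n:ℤ)
      have hdeg : ((2:ℝ[X]) * X * Chebyshev.U ℝ ((n:ℤ)+1)).degree = ((n:WithBot ℕ)+1+1) := by
        rw [degree_mul, deg2X, h2, add_comm]
      have hlt : (Chebyshev.U ℝ (n:ℤ)).degree < ((2:ℝ[X]) * X * Chebyshev.U ℝ ((n:ℤ)+1)).degree := by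
        rw [hdeg, h1]
        rw [show ((n:WithBot ℕ)+1+1) = ((n+2 : ℕ) : WithBot ℕ) by push_cast; ring]
        exact_mod_cast Nat.lt_add_of_pos_right (by norm_num)
      constructor
      · rw [show (((n+1:ℕ)):ℤ) = (n:ℤ)+1 by push_cast; ring, h2]
        push_cast; ring
      · rw [show (((n+1:ℕ)):ℤ)+1 = (n:ℤ)+2 by push_cast; ring, hrec,
          degree_sub_eq_left_of_degree_lt hlt, hdeg]
        push_cast; ring
  exact fun n => (key n).1

lemma shenD_eq (k : ℕ) : shenD k = 2 * ((1 - X^2) * Chebyshev.U ℝ (k:ℤ)) := by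
  rw [shenD, chebT, chebT]
  rw [show (((k+2:ℕ)):ℤ) = (k:ℤ)+2 by push_cast; ring]
  exact shenD_eq' k

lemma deg_one_sub_X_sq : (1 - X^2 : ℝ[X]).degree = 2 := by
  compute_degree!

lemma shenD_degree (k : ℕ) : (shenD k).degree = (k + 2 : ℕ) := by
  rw [shenD_eq, two_eq_C, degree_C_mul (by norm_num), degree_mul, deg_one_sub_X_sq,
    chebU_degree]
  push_cast; ring

lemma shenD_eval_one (k : ℕ) : (shenD k).eval 1 = 0 := by
  rw [shenD_eq]; simp

lemma shenD_eval_neg_one (k : ℕ) : (shenD k).eval (-1) = 0 := by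
  rw [shenD_eq]; simp

lemma chebU_ne_zero (n : ℕ) : Chebyshev.U ℝ (n:ℤ) ≠ 0 := by
  intro h
  have := chebU_degree n
  rw [h, degree_zero] at this
  exact absurd this.symm (by simp)

-- spanning: every polynomial of degree < n is in the span of U_0, ..., U_{n-1}
lemma mem_span_chebU : ∀ (n : ℕ) (p : ℝ[X]), p.degree < (n : ℕ) →
    p ∈ Submodule.span ℝ ((fun k : ℕ => Chebyshev.U ℝ (k:ℤ)) '' Set.Iio n) := by
  intro n
  induction n with
  | zero =>
    intro p hp
    have : p = 0 := degree_eq_bot.mp (Nat.WithBot.lt_zero_iff.mp (by exact_mod_cast hp))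
    simp [this]
  | succ n ih =>
    intro p hp
    set c : ℝ := p.coeff n / (Chebyshev.U ℝ (n:ℤ)).leadingCoeff with hc
    set q : ℝ[X] := p - C c * Chebyshev.U ℝ (n:ℤ) with hq
    have hUn : (Chebyshev.U ℝ (n:ℤ)).natDegree = n := by
      have := chebU_degree n
      exact natDegree_eq_of_degree_eq_some this
    have hqc : q.coeff n = 0 := by
      rw [hq, coeff_sub, coeff_C_mul, hc]
      rw [show (Chebyshev.U ℝ (n:ℤ)).coeff n = (Chebyshev.U ℝ (n:ℤ)).leadingCoeff by
        rw [leadingCoeff, hUn]]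
      field_simp [leadingCoeff_ne_zero.mpr (chebU_ne_zero n)]
      simp
    have hqdeg : q.degree < (n : ℕ) := by
      refine (degree_lt_iff_coeff_zero _ _).mpr ?_
      intro m hm
      rcases eq_or_lt_of_le (Nat.cast_le.mp hm) with h | h
      · rw [← h]; exact hqc
      · have hqle : q.degree < (m : ℕ) := by
          refine lt_of_le_of_lt (degree_sub_le _ _) ?_
          rw [max_lt_iff]
          constructor
          · exact lt_of_lt_of_le hp (by exact_mod_cast h)
          · calc (C c * Chebyshev.U ℝ (n:ℤ)).degree
                ≤ (C c).degree + (Chebyshev.U ℝ (n:ℤ)).degree := degree_mul_le _ _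
              _ ≤ 0 + (Chebyshev.U ℝ (n:ℤ)).degree := add_le_add degree_C_le le_rfl
              _ = ((n:ℕ) : WithBot ℕ) := by rw [zero_add, chebU_degree]
              _ < ((m:ℕ) : WithBot ℕ) := by exact_mod_cast h
        exact coeff_eq_zero_of_degree_lt hqle
    have hqmem := ih q hqdeg
    have hmono : Submodule.span ℝ ((fun k : ℕ => Chebyshev.U ℝ (k:ℤ)) '' Set.Iio n)
        ≤ Submodule.span ℝ ((fun k : ℕ => Chebyshev.U ℝ (k:ℤ)) '' Set.Iio (n+1)) :=
      Submodule.span_mono (Set.image_mono (fun x hx => lt_trans hx (Nat.lt_succ_self n)))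
    have hUmem : Chebyshev.U ℝ (n:ℤ) ∈
        Submodule.span ℝ ((fun k : ℕ => Chebyshev.U ℝ (k:ℤ)) '' Set.Iio (n+1)) :=
      Submodule.subset_span ⟨n, Nat.lt_succ_self n, rfl⟩
    have : p = q + C c * Chebyshev.U ℝ (n:ℤ) := by rw [hq]; ring
    rw [this]
    exact Submodule.add_mem _ (hmono hqmem)
      (by simpa [smul_eq_C_mul] using Submodule.smul_mem _ c hUmem)

lemma shenD_indep (n : ℕ) : LinearIndependent ℝ (fun k : Fin n => shenD (k : ℕ)) := by
  induction n with
  | zero => exact linearIndependent_empty_type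
  | succ n ih =>
    rw [linearIndependent_fin_succ']
    constructor
    · exact ih
    · intro hmem
      have hle : Submodule.span ℝ (Set.range (Fin.init fun k : Fin (n+1) => shenD (k : ℕ)))
          ≤ degreeLT ℝ (n+2) := by
        rw [Submodule.span_le]
        rintro _ ⟨k, rfl⟩
        refine mem_degreeLT.mpr ?_
        rw [Fin.init, shenD_degree]
        exact_mod_cast (by omega : (k:ℕ) + 2 < n + 2)
      have h := mem_degreeLT.mp (hle hmem)
      rw [shenD_degree] at h
      have : ((Fin.last n : ℕ) + 2 : ℕ) < n + 2 := by exact_mod_cast h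
      simp [Fin.last] at this


lemma shenD_mem (N k : ℕ) (hN : 2 ≤ N) (hk : k ≤ N - 2) : shenD k ∈ dirichletSpace N := by
  refine ⟨?_, shenD_eval_one k, shenD_eval_neg_one k⟩
  rw [shenD_degree]
  exact_mod_cast (by omega : k + 2 ≤ N)

lemma shen_mulLeft_U (k : ℕ) :
    LinearMap.mulLeft ℝ (-(1 - X^2) : ℝ[X]) (Chebyshev.U ℝ (k:ℤ)) = (-(1/2) : ℝ) • shenD k := by
  have h2B : (2:ℝ[X]) * ((1 - X^2) * Chebyshev.U ℝ (k:ℤ))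
      = (2:ℝ) • ((1 - X^2) * Chebyshev.U ℝ (k:ℤ)) := by
    rw [smul_eq_C_mul, ← two_eq_C]
  rw [shenD_eq, h2B, smul_smul, LinearMap.mulLeft_apply]
  norm_num
  ring

lemma span_shenD (N : ℕ) (hN : 2 ≤ N) :
    Submodule.span ℝ (Set.range (fun k : Fin (N - 1) => shenD (k : ℕ))) = dirichletSpace N := by
  apply le_antisymm
  · rw [Submodule.span_le]
    rintro _ ⟨k, rfl⟩
    exact shenD_mem N k hN (by omega)
  · intro p hp
    obtain ⟨hdeg, h1, h2⟩ := hp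
    obtain ⟨r, hr⟩ := dvd_iff_isRoot.mpr (h1 : IsRoot p 1)
    have hr2 : r.eval (-1) = 0 := by
      have h2' := h2
      rw [hr] at h2'
      simp at h2'
      rcases h2' with h | h
      · norm_num at h
      · exact h
    obtain ⟨q, hqr⟩ := dvd_iff_isRoot.mpr (hr2 : IsRoot r (-1))
    have hpfac : p = -((1 - X^2) * q) := by
      rw [hr, hqr]
      simp only [map_one, map_neg]
      ring
    have hqdeg : q.degree < ((N - 1 : ℕ) : ℕ) := by
      rcases eq_or_ne q 0 with h0 | h0
      · rw [h0, degree_zero]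
        exact_mod_cast WithBot.bot_lt_coe _
      · have hd : p.degree = 2 + q.degree := by
          rw [hpfac, degree_neg, degree_mul, deg_one_sub_X_sq]
        rw [hd, degree_eq_natDegree h0] at hdeg
        have h2N : 2 + q.natDegree ≤ N := by exact_mod_cast hdeg
        rw [degree_eq_natDegree h0]
        exact_mod_cast (by omega : q.natDegree < N - 1)
    have hq' := mem_span_chebU (N - 1) q hqdeg
    have hLmem := Submodule.mem_map_of_mem (f := LinearMap.mulLeft ℝ (-(1 - X^2) : ℝ[X])) hq'
    rw [Submodule.map_span] at hLmem
    have hLp : LinearMap.mulLeft ℝ (-(1 - X^2) : ℝ[X]) q = p := by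
      rw [hpfac, LinearMap.mulLeft_apply]
      ring
    have hsub : (LinearMap.mulLeft ℝ (-(1 - X^2) : ℝ[X])) ''
        ((fun k : ℕ => Chebyshev.U ℝ (k:ℤ)) '' Set.Iio (N - 1)) ⊆
        ↑(Submodule.span ℝ (Set.range (fun k : Fin (N - 1) => shenD (k : ℕ)))) := by
      rintro _ ⟨_, ⟨k, hk, rfl⟩, rfl⟩
      rw [shen_mulLeft_U]
      exact Submodule.smul_mem _ _ (Submodule.subset_span ⟨⟨k, hk⟩, rfl⟩)
    rw [← hLp]
    exact Submodule.span_le.mpr hsub hLmem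


/-- For `N ≥ 2`, the polynomials `φ̂_0, …, φ̂_{N−2}` form a basis of the space of
polynomials of degree at most `N` vanishing at `±1`; in particular they are
linearly independent and the space has dimension `N − 1`. -/
theorem shenD_is_basis (N : ℕ) (hN : 2 ≤ N) :
    (∀ k : ℕ, k ≤ N - 2 → shenD k ∈ dirichletSpace N) ∧
    LinearIndependent ℝ (fun k : Fin (N - 1) => shenD (k : ℕ)) ∧
    Submodule.span ℝ (Set.range (fun k : Fin (N - 1) => shenD (k : ℕ))) = dirichletSpace N ∧
    Module.finrank ℝ (dirichletSpace N) = N - 1 := by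
  refine ⟨fun k hk => shenD_mem N k hN hk, shenD_indep (N - 1), span_shenD N hN, ?_⟩
  rw [← span_shenD N hN, finrank_span_eq_card (shenD_indep (N - 1)), Fintype.card_fin]
end
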